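/- Let μ ∈ Δ⁺_l be a long positive root and let w ∈ W satisfy w(θ) = μ and have minimal length among all elements of W taking θ to μ. Then {w⁻¹(β) : β ∈ Π and (β, μ) = 0} = {α ∈ Π : w(α) ∈ Π and (α, θ) = 0}. -/

import Mathlib

open scoped InnerProductSpace

/-- An irreducible reduced crystallographic root system, spanning a finite-dimensional
real inner product space, together with a fixed base (set of simple roots) and the
coefficient function expressing each root in the base. -/
structure RootSystemData (V : Type) [NormedAddCommGroup V] [InnerProductSpace ℝ V]
    [FiniteDimensional ℝ V] where
  roots : Set V
  finite : roots.Finite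
  nonzero : ∀ γ ∈ roots, γ ≠ 0
  spans : Submodule.span ℝ roots = ⊤
  reflClosed : ∀ α ∈ roots, ∀ β ∈ roots, β - (2 * ⟪β, α⟫_ℝ / ⟪α, α⟫_ℝ) • α ∈ roots
  crystal : ∀ α ∈ roots, ∀ β ∈ roots, ∃ k : ℤ, 2 * ⟪β, α⟫_ℝ / ⟪α, α⟫_ℝ = (k : ℝ)
  reduced : ∀ α ∈ roots, ∀ t : ℝ, t • α ∈ roots → t = 1 ∨ t = -1
  irred : ∀ A B : Set V, roots = A ∪ B → (∀ a ∈ A, ∀ b ∈ B, ⟪a, b⟫_ℝ = 0) →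
    A = ∅ ∨ B = ∅
  simples : Finset V
  simples_sub : ↑simples ⊆ roots
  simples_indep : LinearIndependent ℝ (Subtype.val : {x : V // x ∈ simples} → V)
  coeff : V → V → ℤ
  coeff_spec : ∀ γ ∈ roots, γ = ∑ α ∈ simples, coeff γ α • α
  coeff_sign : ∀ γ ∈ roots, (∀ α ∈ simples, 0 ≤ coeff γ α) ∨ (∀ α ∈ simples, coeff γ α ≤ 0)

namespace RootSystemData

variable {V : Type} [NormedAddCommGroup V] [InnerProductSpace ℝ V] [FiniteDimensional ℝ V]
variable (R : RootSystemData V)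

/-- The set of positive roots `Δ⁺` (w.r.t. the base `simples`). -/
def posRoots : Set V := {γ | γ ∈ R.roots ∧ ∀ α ∈ R.simples, 0 ≤ R.coeff γ α}

/-- The partial order `μ ≼ ν`: `ν - μ` is a nonnegative integral combination of simple roots. -/
def rle (μ ν : V) : Prop := ∃ c : V → ℕ, ν - μ = ∑ α ∈ R.simples, (c α : ℤ) • α

/-- `θ` is the highest root. -/
def IsHighest (θ : V) : Prop := θ ∈ R.posRoots ∧ ∀ γ ∈ R.roots, R.rle γ θ

/-- `γ` is a long root: a root of maximal length. -/
def IsLong (γ : V) : Prop := γ ∈ R.roots ∧ ∀ γ' ∈ R.roots, ‖γ'‖ ≤ ‖γ‖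

/-- `I` is an upper ideal of `(Δ⁺, ≼)`. -/
def IsUpperIdeal (I : Set V) : Prop :=
  I ⊆ R.posRoots ∧ ∀ ν ∈ I, ∀ γ ∈ R.posRoots, R.rle ν γ → γ ∈ I

/-- `I` is an abelian upper ideal of `(Δ⁺, ≼)`. -/
def IsAbelianIdeal (I : Set V) : Prop :=
  R.IsUpperIdeal I ∧ ∀ γ₁ ∈ I, ∀ γ₂ ∈ I, γ₁ + γ₂ ∉ R.roots

/-- The set of minimal elements of `M ⊆ Δ⁺` w.r.t. `≼`. -/
def minSet (M : Set V) : Set V := {γ | γ ∈ M ∧ ∀ ν ∈ M, R.rle ν γ → ν = γ}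

/-- The set of maximal elements of `M ⊆ Δ⁺` w.r.t. `≼`. -/
def maxSet (M : Set V) : Set V := {γ | γ ∈ M ∧ ∀ ν ∈ M, R.rle γ ν → ν = γ}

/-- `S(I) = {α ∈ Π : ∃ γ ∈ min(I), γ - α ∈ Δ⁺ ∪ {0}}`; the complement `Π ∖ S(I)` is the
set of simple roots of the standard Levi subalgebra of the normaliser of the ideal `I`. -/
def normS (I : Set V) : Set V :=
  {α | α ∈ R.simples ∧ ∃ γ ∈ R.minSet I, (γ - α ∈ R.posRoots ∨ γ = α)}

/-- `H = {γ ∈ Δ⁺ : (γ, θ) ≠ 0}`. -/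
def Hset (θ : V) : Set V := {γ | γ ∈ R.posRoots ∧ ⟪γ, θ⟫_ℝ ≠ 0}

/-- `deg_S(γ) = Σ_{α ∈ S} [γ:α]`. -/
def degS (S : Finset V) (γ : V) : ℤ := ∑ α ∈ S, R.coeff γ α

/-- `I_S = {γ ∈ Δ⁺ : deg_S(γ) ≥ ⌊d(S)/2⌋ + 1}`, where `d(S) = deg_S(θ)`: the abelian ideal
`g(≥ ⌊hot(p)/2⌋ + 1)` associated with the standard parabolic subalgebra `p(S)`. -/
def idealS (S : Finset V) (θ : V) : Set V :=
  {γ | γ ∈ R.posRoots ∧ R.degS S θ / 2 + 1 ≤ R.degS S γ}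

/-- The highest root `θ` is fundamental with `α_θ` the unique simple root not
orthogonal to `θ`, and `(θ, α_θ∨) = 1`. -/
def IsFundamental (θ αθ : V) : Prop :=
  αθ ∈ R.simples ∧ ⟪θ, αθ⟫_ℝ ≠ 0 ∧ (∀ β ∈ R.simples, ⟪θ, β⟫_ℝ ≠ 0 → β = αθ) ∧
    2 * ⟪θ, αθ⟫_ℝ / ⟪αθ, αθ⟫_ℝ = 1

end RootSystemData

/-- The reflection `s_α`. -/
noncomputable def rsRefl {V : Type} [NormedAddCommGroup V] [InnerProductSpace ℝ V] (α x : V) : V :=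
  x - (2 * ⟪x, α⟫_ℝ / ⟪α, α⟫_ℝ) • α

/-- The element of the Weyl group given by the word `l = [α₁, …, α_m]`,
namely `s_{α₁} ∘ ⋯ ∘ s_{α_m}`; its inverse is `wordMap l.reverse`. -/
noncomputable def wordMap {V : Type} [NormedAddCommGroup V] [InnerProductSpace ℝ V] (l : List V) : V → V :=
  l.foldr (fun α f => rsRefl α ∘ f) id

section ReflAux
variable {V : Type} [NormedAddCommGroup V] [InnerProductSpace ℝ V]


lemma rsRefl_add (α x y : V) : rsRefl α (x + y) = rsRefl α x + rsRefl α y := by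
  simp only [rsRefl, inner_add_left]
  match_scalars <;> ring

lemma rsRefl_smul (α : V) (c : ℝ) (x : V) : rsRefl α (c • x) = c • rsRefl α x := by
  simp only [rsRefl, real_inner_smul_left, smul_sub, smul_smul]
  match_scalars <;> ring

lemma rsRefl_inner (α : V) (hα : α ≠ 0) (x y : V) :
    ⟪rsRefl α x, rsRefl α y⟫_ℝ = ⟪x, y⟫_ℝ := by
  have hA : ⟪α, α⟫_ℝ ≠ 0 := by
    simpa [inner_self_eq_zero] using hα
  simp only [rsRefl, inner_sub_left, inner_sub_right, real_inner_smul_left,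
    real_inner_smul_right]
  rw [real_inner_comm α y, real_inner_comm α x]
  field_simp
  ring

lemma rsRefl_invol (α : V) (hα : α ≠ 0) (x : V) : rsRefl α (rsRefl α x) = x := by
  have hA : ⟪α, α⟫_ℝ ≠ 0 := by simpa [inner_self_eq_zero] using hα
  simp only [rsRefl, inner_sub_left, real_inner_smul_left]
  match_scalars
  · ring
  · field_simp
    ring

lemma rsRefl_of_inner_eq_zero (α x : V) (h : ⟪x, α⟫_ℝ = 0) : rsRefl α x = x := by
  simp [rsRefl, h]

lemma wordMap_nil (x : V) : wordMap [] x = x := rfl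

lemma wordMap_cons (a : V) (l : List V) (x : V) :
    wordMap (a :: l) x = rsRefl a (wordMap l x) := rfl

lemma wordMap_singleton (a x : V) : wordMap [a] x = rsRefl a x := rfl

lemma wordMap_append (l₁ l₂ : List V) (x : V) :
    wordMap (l₁ ++ l₂) x = wordMap l₁ (wordMap l₂ x) := by
  induction l₁ with
  | nil => rfl
  | cons a t ih => simp [wordMap_cons, ih]

lemma wordMap_reverse_wordMap (l : List V) (h : ∀ a ∈ l, a ≠ 0) (x : V) :
    wordMap l.reverse (wordMap l x) = x := by
  induction l with
  | nil => rfl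
  | cons a t ih =>
    have ha : a ≠ 0 := h a (by simp)
    simp only [List.reverse_cons, wordMap_cons, wordMap_append, wordMap_singleton,
      wordMap_nil]
    rw [rsRefl_invol a ha, ih (fun b hb => h b (by simp [hb]))]

lemma wordMap_wordMap_reverse (l : List V) (h : ∀ a ∈ l, a ≠ 0) (x : V) :
    wordMap l (wordMap l.reverse x) = x := by
  have := wordMap_reverse_wordMap l.reverse (fun a ha => h a (List.mem_reverse.mp ha)) x
  rwa [List.reverse_reverse] at this

lemma wordMap_inner (l : List V) (h : ∀ a ∈ l, a ≠ 0) (x y : V) :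
    ⟪wordMap l x, wordMap l y⟫_ℝ = ⟪x, y⟫_ℝ := by
  induction l with
  | nil => rfl
  | cons a t ih =>
    simp only [wordMap_cons]
    rw [rsRefl_inner a (h a (by simp)), ih (fun b hb => h b (by simp [hb]))]

lemma wordMap_add (l : List V) (x y : V) :
    wordMap l (x + y) = wordMap l x + wordMap l y := by
  induction l with
  | nil => rfl
  | cons a t ih => simp [wordMap_cons, ih, rsRefl_add]

lemma wordMap_smul (l : List V) (c : ℝ) (x : V) :
    wordMap l (c • x) = c • wordMap l x := by
  induction l with
  | nil => rfl
  | cons a t ih => simp [wordMap_cons, ih, rsRefl_smul]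

lemma wordMap_zero (l : List V) : wordMap l 0 = 0 := by
  have := wordMap_smul l 0 0
  simpa using this

lemma wordMap_sum (l : List V) (s : Finset V) (f : V → ℤ) :
    wordMap l (∑ α ∈ s, f α • α) = ∑ α ∈ s, f α • wordMap l α := by
  classical
  induction s using Finset.induction_on with
  | empty => simp [wordMap_zero]
  | insert _ _ hnot ih =>
    rw [Finset.sum_insert hnot, Finset.sum_insert hnot, wordMap_add, ih]
    congr 1
    rw [← Int.cast_smul_eq_zsmul ℝ, ← Int.cast_smul_eq_zsmul ℝ, wordMap_smul]

lemma rsRefl_sub_smul (α : V) (c : ℝ) (z y : V) :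
    rsRefl α (z - c • y) = rsRefl α z - c • rsRefl α y := by
  rw [sub_eq_add_neg, ← neg_smul, rsRefl_add, rsRefl_smul, neg_smul, ← sub_eq_add_neg]

lemma rsRefl_equivariant (α : V) (hα : α ≠ 0) (y z : V) :
    rsRefl α (rsRefl y z) = rsRefl (rsRefl α y) (rsRefl α z) := by
  show rsRefl α (z - (2 * ⟪z, y⟫_ℝ / ⟪y, y⟫_ℝ) • y) = _
  rw [rsRefl_sub_smul]
  show _ = rsRefl α z - (2 * ⟪rsRefl α z, rsRefl α y⟫_ℝ / ⟪rsRefl α y, rsRefl α y⟫_ℝ) • rsRefl α y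
  rw [rsRefl_inner α hα z y, rsRefl_inner α hα y y]

lemma rsRefl_conj (α : V) (hα : α ≠ 0) (y x : V) :
    rsRefl (rsRefl α y) x = rsRefl α (rsRefl y (rsRefl α x)) := by
  conv_lhs => rw [show x = rsRefl α (rsRefl α x) from (rsRefl_invol α hα x).symm]
  rw [← rsRefl_equivariant α hα y (rsRefl α x)]

end ReflAux

namespace RootSystemData
open scoped Classical
variable {V : Type} [NormedAddCommGroup V] [InnerProductSpace ℝ V] [FiniteDimensional ℝ V]
variable (R : RootSystemData V)

lemma simple_mem_roots {α : V} (h : α ∈ R.simples) : α ∈ R.roots := R.simples_sub h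

lemma simple_ne_zero {α : V} (h : α ∈ R.simples) : α ≠ 0 := R.nonzero α (R.simple_mem_roots h)

lemma root_inner_self_ne {γ : V} (h : γ ∈ R.roots) : ⟪γ, γ⟫_ℝ ≠ 0 := by
  simpa [inner_self_eq_zero] using R.nonzero γ h

/-- Linear independence of the simple roots, in summation form. -/
lemma simples_sum_eq_zero {f : V → ℝ} (h : ∑ α ∈ R.simples, f α • α = 0) :
    ∀ α ∈ R.simples, f α = 0 := by
  classical
  intro α hα
  have hli := linearIndependent_iff'.mp R.simples_indep Finset.univ (fun i => f i.val)
  have hs : ∑ i : {x : V // x ∈ R.simples}, f i.val • i.val = 0 := by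
    rw [Finset.univ_eq_attach, Finset.sum_attach R.simples (fun x => f x • x)]
    exact h
  exact hli hs ⟨α, hα⟩ (Finset.mem_univ _)

/-- Uniqueness of the coefficients of a root in the base. -/
lemma coeff_unique {γ : V} (hγ : γ ∈ R.roots) (d : V → ℤ)
    (h : γ = ∑ α ∈ R.simples, d α • α) : ∀ α ∈ R.simples, d α = R.coeff γ α := by
  classical
  intro α hα
  have h0 : ∑ β ∈ R.simples, ((d β - R.coeff γ β : ℤ) : ℝ) • β = 0 := by
    have := R.coeff_spec γ hγ
    calc ∑ β ∈ R.simples, ((d β - R.coeff γ β : ℤ) : ℝ) • β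
        = ∑ β ∈ R.simples, (d β • β - R.coeff γ β • β) := by
          refine Finset.sum_congr rfl fun β _ => ?_
          push_cast
          rw [sub_smul, Int.cast_smul_eq_zsmul, Int.cast_smul_eq_zsmul]
      _ = (∑ β ∈ R.simples, d β • β) - ∑ β ∈ R.simples, R.coeff γ β • β := by
          rw [Finset.sum_sub_distrib]
      _ = γ - γ := by rw [← h, ← this]
      _ = 0 := sub_self γ
  have := R.simples_sum_eq_zero h0 α hα
  have : ((d α - R.coeff γ α : ℤ) : ℝ) = 0 := this
  exact sub_eq_zero.mp (by exact_mod_cast this)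

/-- Coefficients of a simple root. -/
lemma coeff_simple {α : V} (hα : α ∈ R.simples) :
    ∀ β ∈ R.simples, R.coeff α β = if β = α then 1 else 0 := by
  classical
  intro β hβ
  have := R.coeff_unique (R.simple_mem_roots hα) (fun β => if β = α then 1 else 0) ?_ β hβ
  · exact this.symm
  · rw [show (∑ b ∈ R.simples, (if b = α then (1:ℤ) else 0) • b)
        = ∑ b ∈ R.simples, (if b = α then (1:ℤ) • b else 0) from
      Finset.sum_congr rfl fun b _ => by split <;> simp]
    rw [Finset.sum_ite_eq' R.simples α (fun b => (1 : ℤ) • b)]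
    simp [hα]

lemma simple_mem_pos {α : V} (hα : α ∈ R.simples) : α ∈ R.posRoots := by
  refine ⟨R.simple_mem_roots hα, fun β hβ => ?_⟩
  rw [R.coeff_simple hα β hβ]
  split <;> norm_num

lemma neg_mem_roots {γ : V} (hγ : γ ∈ R.roots) : -γ ∈ R.roots := by
  have h := R.reflClosed γ hγ γ hγ
  have h2 : 2 * ⟪γ, γ⟫_ℝ / ⟪γ, γ⟫_ℝ = 2 := by
    field_simp [R.root_inner_self_ne hγ]
    exact div_self (R.root_inner_self_ne hγ)
  rw [h2] at h
  convert h using 1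
  module

/-- Dichotomy: every root is positive or has all coefficients nonpositive. -/
lemma root_dichotomy {γ : V} (hγ : γ ∈ R.roots) :
    γ ∈ R.posRoots ∨ ∀ α ∈ R.simples, R.coeff γ α ≤ 0 := by
  rcases R.coeff_sign γ hγ with h | h
  · exact Or.inl ⟨hγ, h⟩
  · exact Or.inr h

lemma pos_coeff_nonneg {γ : V} (hγ : γ ∈ R.posRoots) : ∀ α ∈ R.simples, 0 ≤ R.coeff γ α :=
  hγ.2

/-- A positive root supported at a single simple root is that simple root. -/
lemma pos_single_support {γ α : V} (hγ : γ ∈ R.posRoots) (hα : α ∈ R.simples)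
    (h : ∀ β ∈ R.simples, β ≠ α → R.coeff γ β = 0) : γ = α := by
  classical
  have hsum : γ = R.coeff γ α • α := by
    conv_lhs => rw [R.coeff_spec γ hγ.1]
    exact Finset.sum_eq_single α (fun b hb hba => by rw [h b hb hba, zero_smul])
      (fun hαs => absurd hα hαs)
  have hroot : ((R.coeff γ α : ℝ)) • α ∈ R.roots := by
    rw [Int.cast_smul_eq_zsmul, ← hsum]; exact hγ.1
  rcases R.reduced α (R.simple_mem_roots hα) _ hroot with h1 | h1
  · have : R.coeff γ α = 1 := by exact_mod_cast h1
    rw [hsum, this, one_smul]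
  · exfalso
    have : R.coeff γ α = -1 := by exact_mod_cast h1
    have := hγ.2 α hα
    omega

end RootSystemData

namespace RootSystemData
open scoped Classical
variable {V : Type} [NormedAddCommGroup V] [InnerProductSpace ℝ V] [FiniteDimensional ℝ V]
variable (R : RootSystemData V)

/-- Equal ℤ-combinations of simple roots have equal coefficients. -/
lemma zcombo_eq {d e : V → ℤ}
    (h : ∑ β ∈ R.simples, d β • β = ∑ β ∈ R.simples, e β • β) :
    ∀ β ∈ R.simples, d β = e β := by
  intro β hβ
  have h0 : ∑ β ∈ R.simples, ((d β - e β : ℤ) : ℝ) • β = 0 := by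
    calc ∑ β ∈ R.simples, ((d β - e β : ℤ) : ℝ) • β
        = ∑ β ∈ R.simples, (d β • β - e β • β) := by
          refine Finset.sum_congr rfl fun β _ => ?_
          push_cast
          rw [sub_smul, Int.cast_smul_eq_zsmul, Int.cast_smul_eq_zsmul]
      _ = (∑ β ∈ R.simples, d β • β) - ∑ β ∈ R.simples, e β • β := by
          rw [Finset.sum_sub_distrib]
      _ = 0 := by rw [h, sub_self]
  have h1 := R.simples_sum_eq_zero h0 β hβ
  have h2 : ((d β - e β : ℤ) : ℝ) = 0 := h1
  have : d β - e β = 0 := by exact_mod_cast h2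
  omega

/-- A simple reflection permutes the positive roots other than the simple root itself. -/
lemma simple_refl_pos {α γ : V} (hα : α ∈ R.simples) (hγ : γ ∈ R.posRoots) (hne : γ ≠ α) :
    rsRefl α γ ∈ R.posRoots := by
  obtain ⟨k, hk⟩ := R.crystal α (R.simple_mem_roots hα) γ hγ.1
  have hδroot : rsRefl α γ ∈ R.roots := R.reflClosed α (R.simple_mem_roots hα) γ hγ.1
  have hδ : rsRefl α γ = ∑ β ∈ R.simples, (R.coeff γ β - if β = α then k else 0) • β := by
    have e1 : rsRefl α γ = γ - k • α := by
      rw [rsRefl, hk, Int.cast_smul_eq_zsmul]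
    rw [e1]
    conv_lhs => rw [R.coeff_spec γ hγ.1]
    rw [show (∑ β ∈ R.simples, (R.coeff γ β - if β = α then k else 0) • β)
        = ∑ β ∈ R.simples, (R.coeff γ β • β - (if β = α then k • β else 0)) from
      Finset.sum_congr rfl fun β _ => by split <;> simp [sub_smul]]
    rw [Finset.sum_sub_distrib, Finset.sum_ite_eq' R.simples α (fun b => k • b)]
    simp [hα]
  have hcoeff := R.coeff_unique hδroot _ hδ
  rcases R.root_dichotomy hδroot with h | h
  · exact h
  · exfalso
    apply hne
    apply R.pos_single_support hγ hα
    intro β hβ hβα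
    have h1 := h β hβ
    rw [← hcoeff β hβ] at h1
    simp only [if_neg hβα, sub_zero] at h1
    exact le_antisymm h1 (hγ.2 β hβ)

/-- The height of a positive root is at least one. -/
lemma ht_ge_one {γ : V} (hγ : γ ∈ R.posRoots) : 1 ≤ ∑ α ∈ R.simples, R.coeff γ α := by
  by_contra hlt
  push_neg at hlt
  have hge : 0 ≤ ∑ α ∈ R.simples, R.coeff γ α := Finset.sum_nonneg hγ.2
  have hz : ∀ α ∈ R.simples, R.coeff γ α = 0 := by
    have : ∑ α ∈ R.simples, R.coeff γ α = 0 := by omega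
    exact fun α hα => (Finset.sum_eq_zero_iff_of_nonneg hγ.2).mp this α hα
  apply R.nonzero γ hγ.1
  rw [R.coeff_spec γ hγ.1]
  exact Finset.sum_eq_zero fun α hα => by rw [hz α hα, zero_smul]

/-- The highest root is dominant. -/
lemma theta_dominant {θ : V} (hθ : R.IsHighest θ) : ∀ α ∈ R.simples, 0 ≤ ⟪θ, α⟫_ℝ := by
  intro α hα
  by_contra hneg
  push_neg at hneg
  obtain ⟨k, hk⟩ := R.crystal α (R.simple_mem_roots hα) θ hθ.1.1
  have hαα : (0:ℝ) < ⟪α, α⟫_ℝ :=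
    lt_of_le_of_ne real_inner_self_nonneg
      (Ne.symm (R.root_inner_self_ne (R.simple_mem_roots hα)))
  have hkneg : (k : ℝ) < 0 := by
    rw [← hk]
    exact div_neg_of_neg_of_pos (by linarith) hαα
  have hkneg' : k < 0 := by exact_mod_cast hkneg
  have hδroot : rsRefl α θ ∈ R.roots := R.reflClosed α (R.simple_mem_roots hα) θ hθ.1.1
  obtain ⟨c, hc⟩ := hθ.2 _ hδroot
  have hdiff : θ - rsRefl α θ = ∑ β ∈ R.simples, (if β = α then k else 0) • β := by
    rw [rsRefl, hk, Int.cast_smul_eq_zsmul]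
    rw [show (∑ β ∈ R.simples, (if β = α then k else 0) • β)
        = ∑ β ∈ R.simples, (if β = α then k • β else 0) from
      Finset.sum_congr rfl fun β _ => by split <;> simp]
    rw [Finset.sum_ite_eq' R.simples α (fun b => k • b)]
    simp [hα]
  rw [hdiff] at hc
  have := R.zcombo_eq hc α hα
  rw [if_pos rfl] at this
  omega

/-- wordMap with letters among the simple roots maps roots to roots. -/
lemma wordMap_mem_roots (l : List V) (hl : ∀ a ∈ l, a ∈ R.simples) {γ : V}
    (hγ : γ ∈ R.roots) : wordMap l γ ∈ R.roots := by
  induction l with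
  | nil => exact hγ
  | cons a t ih =>
    rw [wordMap_cons]
    exact R.reflClosed a (R.simple_mem_roots (hl a (by simp)))
      _ (ih fun b hb => hl b (by simp [hb]))

/-- Strong exchange condition (left form). -/
lemma exchange (l : List V) (hl : ∀ a ∈ l, a ∈ R.simples) {β : V} (hβ : β ∈ R.posRoots)
    (hneg : wordMap l.reverse β ∉ R.posRoots) :
    ∃ l'' : List V, (∀ a ∈ l'', a ∈ R.simples) ∧ l''.length + 1 = l.length ∧
      ∀ x, wordMap l'' x = rsRefl β (wordMap l x) := by
  induction l generalizing β with
  | nil => exact absurd hβ hneg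
  | cons a t ih =>
    have ha : a ∈ R.simples := hl a (by simp)
    have ha0 : a ≠ 0 := R.simple_ne_zero ha
    by_cases hba : β = a
    · refine ⟨t, fun b hb => hl b (by simp [hb]), by simp, fun x => ?_⟩
      rw [wordMap_cons, hba]
      exact (rsRefl_invol a ha0 _).symm
    · have hβ' : rsRefl a β ∈ R.posRoots := R.simple_refl_pos ha hβ hba
      have hneg' : wordMap t.reverse (rsRefl a β) ∉ R.posRoots := by
        have e : wordMap (a::t).reverse β = wordMap t.reverse (rsRefl a β) := by
          rw [List.reverse_cons, wordMap_append]; rfl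
        rwa [e] at hneg
      obtain ⟨t'', ht''s, ht''len, ht''⟩ := ih (fun b hb => hl b (by simp [hb])) hβ' hneg'
      refine ⟨a :: t'', ?_, by simpa using ht''len, fun x => ?_⟩
      · intro b hb
        rcases List.mem_cons.mp hb with h | h
        · rw [h]; exact ha
        · exact ht''s b h
      · rw [wordMap_cons, ht'' x, wordMap_cons]
        rw [rsRefl_conj a ha0 β (wordMap t x), rsRefl_invol a ha0]

/-- Strong exchange condition (right form). -/
lemma exchange_right (l : List V) (hl : ∀ a ∈ l, a ∈ R.simples) {α : V}
    (hα : α ∈ R.simples) (hneg : wordMap l α ∉ R.posRoots) :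
    ∃ l'' : List V, (∀ a ∈ l'', a ∈ R.simples) ∧ l''.length + 1 = l.length ∧
      ∀ x, wordMap l'' x = wordMap l (rsRefl α x) := by
  have hneg' : wordMap l.reverse.reverse α ∉ R.posRoots := by
    rwa [List.reverse_reverse]
  obtain ⟨t'', ht''s, ht''len, ht''⟩ :=
    R.exchange l.reverse (fun a hab => hl a (List.mem_reverse.mp hab)) (R.simple_mem_pos hα)
      hneg'
  have ht''0 : ∀ a ∈ t'', a ≠ 0 := fun a hab => R.simple_ne_zero (ht''s a hab)
  have hl0 : ∀ a ∈ l, a ≠ 0 := fun a hab => R.simple_ne_zero (hl a hab)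
  refine ⟨t''.reverse, fun a hab => ht''s a (List.mem_reverse.mp hab),
    by simpa using ht''len, fun x => ?_⟩
  have key : wordMap t'' (wordMap l (rsRefl α x)) = x := by
    rw [ht'', wordMap_reverse_wordMap l hl0, rsRefl_invol α (R.simple_ne_zero hα)]
  calc wordMap t''.reverse x
      = wordMap t''.reverse (wordMap t'' (wordMap l (rsRefl α x))) := by rw [key]
    _ = wordMap l (rsRefl α x) := wordMap_reverse_wordMap t'' ht''0 _

end RootSystemData


/-- part of Theorem 2.4(i): for a long positive root `μ` and the minimal
length element `w ∈ W` with `w(θ) = μ`, one has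
`{w⁻¹(β) : β ∈ Π, (β, μ) = 0} = {α ∈ Π : w(α) ∈ Π and (α, θ) = 0}`. -/
theorem stmt2 {V : Type} [NormedAddCommGroup V] [InnerProductSpace ℝ V] [FiniteDimensional ℝ V]
    (R : RootSystemData V) (θ μ : V) (hθ : R.IsHighest θ)
    (hμpos : μ ∈ R.posRoots) (hμlong : R.IsLong μ)
    (l : List V) (hl : ∀ α ∈ l, α ∈ R.simples) (hw : wordMap l θ = μ)
    (hmin : ∀ l' : List V, (∀ α ∈ l', α ∈ R.simples) → wordMap l' θ = μ →
      l.length ≤ l'.length) :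
    {x : V | ∃ β ∈ R.simples, ⟪β, μ⟫_ℝ = 0 ∧ x = wordMap l.reverse β}
      = {α : V | α ∈ R.simples ∧ wordMap l α ∈ R.simples ∧ ⟪α, θ⟫_ℝ = 0} := by
  classical
  have hl0 : ∀ a ∈ l, a ≠ 0 := fun a ha => R.simple_ne_zero (hl a ha)
  have hlr : ∀ a ∈ l.reverse, a ∈ R.simples := fun a ha => hl a (List.mem_reverse.mp ha)
  have hθroot : θ ∈ R.roots := hθ.1.1
  have hdom := R.theta_dominant hθ
  ext x
  simp only [Set.mem_setOf_eq]
  constructor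
  · rintro ⟨β, hβS, hβμ, rfl⟩
    set γ := wordMap l.reverse β with hγdef
    have hγroot : γ ∈ R.roots := R.wordMap_mem_roots l.reverse hlr (R.simple_mem_roots hβS)
    have hwγ : wordMap l γ = β := wordMap_wordMap_reverse l hl0 β
    have hγθ : ⟪γ, θ⟫_ℝ = 0 := by
      have h1 : ⟪wordMap l γ, wordMap l θ⟫_ℝ = ⟪γ, θ⟫_ℝ := wordMap_inner l hl0 γ θ
      rw [hwγ, hw] at h1
      exact h1.symm.trans hβμ
    have hγpos : γ ∈ R.posRoots := by
      by_contra hneg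
      obtain ⟨l'', hs'', hlen'', hmap''⟩ :=
        R.exchange l hl (R.simple_mem_pos hβS) (hγdef ▸ hneg)
      have hμ'' : wordMap l'' θ = μ := by
        rw [hmap'' θ, hw, rsRefl_of_inner_eq_zero β μ (by rw [real_inner_comm]; exact hβμ)]
      have := hmin l'' hs'' hμ''
      omega
    -- support of γ is orthogonal to θ
    have hsup : ∀ α ∈ R.simples, R.coeff γ α ≠ 0 → ⟪θ, α⟫_ℝ = 0 := by
      intro α hα hcαne
      have hexp : ⟪γ, θ⟫_ℝ = ∑ α ∈ R.simples, (R.coeff γ α : ℝ) * ⟪α, θ⟫_ℝ := by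
        conv_lhs => rw [R.coeff_spec γ hγroot]
        rw [sum_inner]
        refine Finset.sum_congr rfl fun β' _ => ?_
        rw [← Int.cast_smul_eq_zsmul ℝ, real_inner_smul_left]
      have hterm : ∀ α ∈ R.simples, 0 ≤ (R.coeff γ α : ℝ) * ⟪α, θ⟫_ℝ := fun α hα =>
        mul_nonneg (by exact_mod_cast hγpos.2 α hα)
          (by rw [real_inner_comm]; exact hdom α hα)
      have hzero := (Finset.sum_eq_zero_iff_of_nonneg hterm).mp (by rw [← hexp]; exact hγθ)
      rcases mul_eq_zero.mp (hzero α hα) with h | h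
      · exact absurd (by exact_mod_cast h) hcαne
      · rw [real_inner_comm]; exact h
    -- w maps the support of γ to positive roots
    have hwpos : ∀ α ∈ R.simples, R.coeff γ α ≠ 0 → wordMap l α ∈ R.posRoots := by
      intro α hα hc
      by_contra hneg
      obtain ⟨l'', hs'', hlen'', hmap''⟩ := R.exchange_right l hl hα hneg
      have hμ'' : wordMap l'' θ = μ := by
        rw [hmap'' θ, rsRefl_of_inner_eq_zero α θ (hsup α hα hc), hw]
      have := hmin l'' hs'' hμ''
      omega
    -- expand β in terms of the coefficients of γ
    have hβexp : β = ∑ δ ∈ R.simples,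
        (∑ α ∈ R.simples, R.coeff γ α * R.coeff (wordMap l α) δ) • δ := by
      have e1 : wordMap l γ = ∑ α ∈ R.simples, R.coeff γ α • wordMap l α := by
        conv_lhs => rw [R.coeff_spec γ hγroot]
        exact wordMap_sum l R.simples (R.coeff γ)
      calc β = wordMap l γ := hwγ.symm
        _ = ∑ α ∈ R.simples, R.coeff γ α • wordMap l α := e1
        _ = ∑ α ∈ R.simples, ∑ δ ∈ R.simples,
              (R.coeff γ α * R.coeff (wordMap l α) δ) • δ := by
            refine Finset.sum_congr rfl fun α hα => ?_
            conv_lhs => rw [R.coeff_spec (wordMap l α)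
              (R.wordMap_mem_roots l hl (R.simple_mem_roots hα))]
            rw [Finset.smul_sum]
            exact Finset.sum_congr rfl fun δ _ => (smul_smul _ _ _)
        _ = ∑ δ ∈ R.simples, ∑ α ∈ R.simples,
              (R.coeff γ α * R.coeff (wordMap l α) δ) • δ := Finset.sum_comm
        _ = ∑ δ ∈ R.simples,
              (∑ α ∈ R.simples, R.coeff γ α * R.coeff (wordMap l α) δ) • δ := by
            refine Finset.sum_congr rfl fun δ _ => ?_
            rw [Finset.sum_smul]
    have hcoeffβ := R.coeff_unique (R.simple_mem_roots hβS) _ hβexp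
    -- height of β is 1
    have hhtβ : ∑ δ ∈ R.simples, R.coeff β δ = 1 := by
      rw [Finset.sum_congr rfl (R.coeff_simple hβS)]
      rw [Finset.sum_ite_eq' R.simples β (fun _ => (1:ℤ))]
      simp [hβS]
    have h3 : (1:ℤ) = ∑ α ∈ R.simples,
        R.coeff γ α * ∑ δ ∈ R.simples, R.coeff (wordMap l α) δ := by
      calc (1:ℤ) = ∑ δ ∈ R.simples, R.coeff β δ := hhtβ.symm
        _ = ∑ δ ∈ R.simples, ∑ α ∈ R.simples,
              R.coeff γ α * R.coeff (wordMap l α) δ := by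
            refine Finset.sum_congr rfl fun δ hδ => ?_
            rw [← hcoeffβ δ hδ]
        _ = ∑ α ∈ R.simples, ∑ δ ∈ R.simples,
              R.coeff γ α * R.coeff (wordMap l α) δ := Finset.sum_comm
        _ = ∑ α ∈ R.simples, R.coeff γ α * ∑ δ ∈ R.simples,
              R.coeff (wordMap l α) δ := by
            refine Finset.sum_congr rfl fun α _ => ?_
            rw [Finset.mul_sum]
    have h4 : ∑ α ∈ R.simples, R.coeff γ α ≤ ∑ α ∈ R.simples,
        R.coeff γ α * ∑ δ ∈ R.simples, R.coeff (wordMap l α) δ := by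
      refine Finset.sum_le_sum fun α hα => ?_
      by_cases hc : R.coeff γ α = 0
      · rw [hc, zero_mul]
      · have h1 := R.ht_ge_one (hwpos α hα hc)
        have h2 := hγpos.2 α hα
        nlinarith
    have h5 := R.ht_ge_one hγpos
    have hsum1 : ∑ α ∈ R.simples, R.coeff γ α = 1 := le_antisymm (by omega) h5
    -- extract the unique simple root in the support
    have hex : ∃ α₀ ∈ R.simples, R.coeff γ α₀ ≠ 0 := by
      by_contra h
      push_neg at h
      rw [Finset.sum_eq_zero (fun α hα => h α hα)] at hsum1
      omega
    obtain ⟨α₀, hα₀S, hα₀⟩ := hex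
    have hc₀pos : 1 ≤ R.coeff γ α₀ := by have := hγpos.2 α₀ hα₀S; omega
    have hnnerase : ∀ α ∈ R.simples.erase α₀, 0 ≤ R.coeff γ α :=
      fun α hα => hγpos.2 α (Finset.mem_of_mem_erase hα)
    have herase : ∑ α ∈ R.simples.erase α₀, R.coeff γ α = 0 := by
      have hadd := Finset.add_sum_erase R.simples (R.coeff γ) hα₀S
      have hnn : 0 ≤ ∑ α ∈ R.simples.erase α₀, R.coeff γ α := Finset.sum_nonneg hnnerase
      omega
    have hothers : ∀ β' ∈ R.simples, β' ≠ α₀ → R.coeff γ β' = 0 := fun β' hβ' hne =>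
      (Finset.sum_eq_zero_iff_of_nonneg hnnerase).mp herase β'
        (Finset.mem_erase.mpr ⟨hne, hβ'⟩)
    have hγα₀ := R.pos_single_support hγpos hα₀S hothers
    refine ⟨hγα₀ ▸ hα₀S, ?_, hγθ⟩
    rw [hwγ]
    exact hβS
  · rintro ⟨hxS, hwxS, hxθ⟩
    refine ⟨wordMap l x, hwxS, ?_, ?_⟩
    · have h1 : ⟪wordMap l x, wordMap l θ⟫_ℝ = ⟪x, θ⟫_ℝ := wordMap_inner l hl0 x θ
      rw [hw] at h1
      rw [h1]
      exact hxθ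
    · exact (wordMap_reverse_wordMap l hl0 x).symm
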